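/- If an x-interval [i..j) of a cyclic suffix array is an ℓ-interval for some ℓ > |x|, then there exists a unique string y of length ℓ − |x| such that [i..j) is also the xy-interval. -/

import Mathlib

set_option linter.unusedSectionVars false

namespace SILA

variable {α : Type*} [LinearOrder α]

/-- Lexicographic order on infinite strings. -/
def lexLE (f g : ℕ → α) : Prop :=
  f = g ∨ ∃ k, (∀ m < k, f m = g m) ∧ f k < g k

/-- Length of longest common prefix of two infinite strings, in ℕ∞. -/
noncomputable def lcpInf (f g : ℕ → α) : ℕ∞ :=
  sSup {m : ℕ∞ | ∀ k : ℕ, (k : ℕ∞) < m → f k = g k}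

/-- A (nonempty) cyclic word. -/
structure CyclicWord (α : Type*) where
  word : List α
  ne : word ≠ []

def CyclicWord.len (w : CyclicWord α) : ℕ := w.word.length

lemma CyclicWord.len_pos (w : CyclicWord α) : 0 < w.len :=
  List.length_pos_iff.mpr w.ne

/-- Positions in a multiset (family) of cyclic words. -/
def Pos {s : ℕ} (W : Fin s → CyclicWord α) : Type _ :=
  (i : Fin s) × Fin (W i).len

instance {s : ℕ} (W : Fin s → CyclicWord α) : Fintype (Pos W) := by
  unfold Pos; infer_instance

/-- The infinite cyclic suffix starting at a position. -/
def suffixAt {s : ℕ} (W : Fin s → CyclicWord α) (p : Pos W) : ℕ → α :=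
  fun k => (W p.1).word.get ⟨(p.2.val + k) % (W p.1).len, Nat.mod_lt _ (W p.1).len_pos⟩

/-- `SA` is a cyclic suffix array of `W`: it enumerates all positions in
nondecreasing lexicographic order of their cyclic suffixes. -/
def IsCyclicSA {s n : ℕ} (W : Fin s → CyclicWord α) (SA : Fin n ≃ Pos W) : Prop :=
  ∀ r r' : Fin n, r ≤ r' → lexLE (suffixAt W (SA r)) (suffixAt W (SA r'))

/-- The LCP array of a cyclic suffix array (meaningful on indices 1..n-1). -/
noncomputable def lcpArr {s n : ℕ} (W : Fin s → CyclicWord α) (SA : Fin n ≃ Pos W)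
    (r : ℕ) : ℕ∞ :=
  if h : 0 < r ∧ r < n then
    lcpInf (suffixAt W (SA ⟨r - 1, by omega⟩)) (suffixAt W (SA ⟨r, h.2⟩))
  else 0

/-- The Burrows–Wheeler transform: character cyclically preceding the suffix of rank `r`. -/
def bwt {s n : ℕ} (W : Fin s → CyclicWord α) (SA : Fin n ≃ Pos W) (r : Fin n) : α :=
  (W (SA r).1).word.get ⟨((SA r).2.val + (W (SA r).1).len - 1) % (W (SA r).1).len,
    Nat.mod_lt _ (W (SA r).1).len_pos⟩

/-- `x` is a (finite) prefix of the infinite string `f`. -/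
def IsPrefix (x : List α) (f : ℕ → α) : Prop :=
  ∀ m : Fin x.length, f m.val = x.get m

/-- `[i..j)` is the x-interval: the ranks of exactly those suffixes with prefix `x`. -/
def IsXInterval {s n : ℕ} (W : Fin s → CyclicWord α) (SA : Fin n ≃ Pos W)
    (x : List α) (i j : ℕ) : Prop :=
  i ≤ j ∧ j ≤ n ∧ ∀ r : Fin n, IsPrefix x (suffixAt W (SA r)) ↔ (i ≤ r.val ∧ r.val < j)

/-- `[i..j)` is an ℓ-interval of the LCP array `L` (of length `n`, indices 1..n-1). -/
def IsLInterval (L : ℕ → ℕ∞) (n : ℕ) (ℓ : ℕ∞) (i j : ℕ) : Prop :=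
  i < j ∧ j ≤ n ∧
  (i = 0 ∨ L i < ℓ) ∧
  (∀ r, i < r → r < j → ℓ ≤ L r) ∧
  ((i + 1 = j ∧ ℓ = ⊤) ∨ ∃ r, i < r ∧ r < j ∧ L r = ℓ) ∧
  (j = n ∨ L j < ℓ)



lemma le_lcpInf_iff {α : Type*} [LinearOrder α] (f g : ℕ → α) (ℓ : ℕ) :
    (ℓ : ℕ∞) ≤ lcpInf f g ↔ ∀ k < ℓ, f k = g k := by
  constructor
  · intro h k hk
    have hk' : (k : ℕ∞) < lcpInf f g :=
      lt_of_lt_of_le (by exact_mod_cast hk) h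
    obtain ⟨m, hm, hkm⟩ := lt_sSup_iff.mp hk'
    exact hm k hkm
  · intro h
    apply le_sSup
    intro k hk
    exact h k (by exact_mod_cast hk)

/-- If an x-interval `[i..j)` is an ℓ-interval for some ℓ > |x|,
then there is a unique string `y` of length ℓ − |x| such that `[i..j)` is also the
xy-interval. -/
theorem xInterval_extension_unique {α : Type*} [LinearOrder α] {s n : ℕ}
    (W : Fin s → CyclicWord α) (SA : Fin n ≃ Pos W) (hSA : IsCyclicSA W SA)
    (x : List α) (i j : ℕ) (ℓ : ℕ)
    (hx : IsXInterval W SA x i j)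
    (hℓ : IsLInterval (lcpArr W SA) n (ℓ : ℕ∞) i j)
    (hlen : x.length < ℓ) :
    ∃! y : List α, y.length = ℓ - x.length ∧ IsXInterval W SA (x ++ y) i j := by
  obtain ⟨hij, hjn, hxiff⟩ := hx
  obtain ⟨hij', hjn', _, hmin, _, _⟩ := hℓ
  have hin : i < n := lt_of_lt_of_le hij' hjn
  set f : Fin n → ℕ → α := fun r => suffixAt W (SA r) with hf
  set ii : Fin n := ⟨i, hin⟩ with hii
  -- all suffixes in [i,j) agree with the one at rank i on the first ℓ chars
  have agree : ∀ r : ℕ, i ≤ r → ∀ hr2 : r < j, ∀ k < ℓ, f ii k = f ⟨r, lt_of_lt_of_le hr2 hjn⟩ k := by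
    intro r hr
    induction r, hr using Nat.le_induction with
    | base => intro _ k _; rfl
    | succ m hm ih =>
      intro hmj k hk
      have hmj' : m < j := by omega
      have hlcp : (ℓ : ℕ∞) ≤ lcpArr W SA (m + 1) := hmin (m + 1) (by omega) hmj
      have hpos : 0 < m + 1 ∧ m + 1 < n := ⟨Nat.succ_pos m, lt_of_lt_of_le hmj hjn⟩
      rw [lcpArr, dif_pos hpos] at hlcp
      have heq := (le_lcpInf_iff _ _ ℓ).mp hlcp k hk
      have h1 := ih hmj' k hk
      simp only [Nat.add_sub_cancel] at heq
      exact h1.trans heq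
  have hxlen_le : x.length ≤ ℓ := le_of_lt hlen
  -- x is a prefix of the suffix at rank i
  have hxi : IsPrefix x (f ii) := (hxiff ii).mpr ⟨le_refl i, hij'⟩
  set y : List α := List.ofFn (fun m : Fin (ℓ - x.length) => f ii (x.length + m.val)) with hy
  have hylen : y.length = ℓ - x.length := by simp [hy]
  have hxylen : (x ++ y).length = ℓ := by
    simp [hylen]; omega
  -- prefix of x++y of suffix at rank r characterization
  have key : ∀ r : Fin n, IsPrefix (x ++ y) (f r) ↔ (i ≤ r.val ∧ r.val < j) := by
    intro r
    constructor
    · intro hp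
      apply (hxiff r).mp
      intro m
      have hm : m.val < (x ++ y).length := by
        simp; omega
      have := hp ⟨m.val, hm⟩
      simpa [List.get_eq_getElem, List.getElem_append_left m.isLt] using this
    · rintro ⟨hr1, hr2⟩
      intro m
      have hmℓ : m.val < ℓ := by
        have := m.isLt; omega
      have hag : f ii m.val = f r m.val := by
        have := agree r.val hr1 hr2 m.val hmℓ
        simpa using this
      rw [← hag]
      rcases lt_or_ge m.val x.length with hcase | hcase
      · have := hxi ⟨m.val, hcase⟩
        simpa [List.get_eq_getElem, List.getElem_append_left hcase] using this
      · have hlt : m.val - x.length < y.length := by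
          have := m.isLt
          have h2 : (x ++ y).length = x.length + y.length := List.length_append
          omega
        simp only [List.get_eq_getElem, List.getElem_append_right hcase]
        simp only [hy, List.getElem_ofFn]
        congr 1
        omega
  refine ⟨y, ⟨hylen, hij'.le, hjn, key⟩, ?_⟩
  rintro y' ⟨hy'len, _, _, hy'iff⟩
  have hpy' : IsPrefix (x ++ y') (f ii) := (hy'iff ii).mpr ⟨le_refl i, hij'⟩
  have hpy : IsPrefix (x ++ y) (f ii) := (key ii).mpr ⟨le_refl i, hij'⟩
  have hlen' : (x ++ y').length = (x ++ y).length := by simp [hylen, hy'len]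
  have : x ++ y' = x ++ y := by
    apply List.ext_get hlen'
    intro m h1 h2
    rw [← hpy' ⟨m, h1⟩, ← hpy ⟨m, h2⟩]
  exact List.append_cancel_left this


end SILA
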